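/- Let q be a prime power with q ≡ 1 (mod 4), d = (q-1)/4, and g a generator of F_q^*. For 0 ≤ i ≤ d-1, define the coefficients a₀, a₁, a₂ of f(x) = a₂x^(3d+1) + a₁x^(d+1) + a₀x as in Theorem 1 (a₀ = (g^(2(4i+2))+1)/(2g^(4i+2)), a₁ = (g^d+1)(g^(2(4i+2))-1)/(4g^(4i+d+2)), a₂ = g^d a₁). Then for every integer k, f(g^(4k)) = g^(4k+4i+2) and f(g^(4k+1)) = g^(4k+4i+3). -/

import Mathlib

private lemma key_sum {F : Type*} [Field F] (A B : F) (hA : A ^ 2 = -1) (hB : B ≠ 0)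
    (h2 : (2 : F) ≠ 0) :
    (B ^ 2 + 1) / (2 * B) + (A + 1) * (B ^ 2 - 1) / (4 * (B * A)) +
      A * ((A + 1) * (B ^ 2 - 1) / (4 * (B * A))) = B := by
  have hA0 : A ≠ 0 := by
    intro h
    rw [h] at hA
    exact absurd (show (1:F) = 0 by linear_combination hA) one_ne_zero
  have h4 : (4 : F) ≠ 0 := by
    intro h
    have h22 : (2:F) * 2 = 0 := by linear_combination h
    rcases mul_eq_zero.mp h22 with h' | h' <;> exact h2 h'
  have hD : (4 * (B * A)) ≠ 0 := mul_ne_zero h4 (mul_ne_zero hB hA0)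
  have t1 : (B ^ 2 + 1) / (2 * B) = (2 * A * (B ^ 2 + 1)) / (4 * (B * A)) := by
    rw [div_eq_div_iff (mul_ne_zero h2 hB) hD]; ring
  rw [t1, ← mul_div_assoc A, ← add_div, ← add_div, div_eq_iff hD]
  linear_combination (B ^ 2 - 1) * hA

theorem stmt2 {F : Type*} [Field F] [Fintype F] (q : ℕ)
    (hq : Fintype.card F = q) (hq4 : q % 4 = 1)
    (d : ℕ) (hd : d = (q - 1) / 4)
    (g : Fˣ) (hg : ∀ x : Fˣ, x ∈ Subgroup.zpowers g)
    (i : ℕ) (hi : i ≤ d - 1)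
    (a0 a1 a2 : F)
    (ha0 : a0 = ((g : F) ^ (2 * (4 * i + 2)) + 1) / (2 * (g : F) ^ (4 * i + 2)))
    (ha1 : a1 = (((g : F) ^ d + 1) * ((g : F) ^ (2 * (4 * i + 2)) - 1)) /
      (4 * (g : F) ^ (4 * i + d + 2)))
    (ha2 : a2 = (g : F) ^ d * a1)
    (f : F → F)
    (hf : ∀ x, f x = a2 * x ^ (3 * d + 1) + a1 * x ^ (d + 1) + a0 * x) :
    ∀ k : ℤ,
      f ((g ^ (4 * k) : Fˣ) : F) = ((g ^ (4 * k + 4 * (i : ℤ) + 2) : Fˣ) : F) ∧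
      f ((g ^ (4 * k + 1) : Fˣ) : F) = ((g ^ (4 * k + 4 * (i : ℤ) + 3) : Fˣ) : F) := by
  classical
  have hq2 : 2 ≤ q := hq ▸ Fintype.one_lt_card
  have hqd : q - 1 = 4 * d := by omega
  have hd1 : 1 ≤ d := by omega
  have horder : orderOf g = 4 * d := by
    rw [orderOf_eq_card_of_forall_mem_zpowers hg, Nat.card_eq_fintype_card,
      Fintype.card_units, hq, hqd]
  have hg4d : g ^ (4 * d) = 1 := by rw [← horder]; exact pow_orderOf_eq_one g
  have hg2dne : g ^ (2 * d) ≠ 1 := by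
    intro h
    have h2 := orderOf_dvd_of_pow_eq_one h
    rw [horder] at h2
    have := Nat.le_of_dvd (by omega) h2
    omega
  have hG4d : (g : F) ^ (4 * d) = 1 := by
    have := congrArg (Units.val) hg4d
    simpa using this
  have hG2dne : (g : F) ^ (2 * d) ≠ 1 := by
    intro h
    exact hg2dne (Units.ext (by simpa using h))
  have hG2d : (g : F) ^ (2 * d) = -1 := by
    have hsq : ((g : F) ^ (2 * d) - 1) * ((g : F) ^ (2 * d) + 1) = 0 := by
      have h44 : (g : F) ^ (2 * d) * (g : F) ^ (2 * d) = 1 := by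
        rw [← pow_add, show 2 * d + 2 * d = 4 * d by ring]
        exact hG4d
      linear_combination h44
    rcases mul_eq_zero.mp hsq with h | h
    · exact absurd (by linear_combination h) hG2dne
    · linear_combination h
  have h2 : (2 : F) ≠ 0 := by
    intro h
    exact hG2dne (by rw [hG2d]; linear_combination -h)
  have hG0 : (g : F) ≠ 0 := g.ne_zero
  have hA : ((g : F) ^ d) ^ 2 = -1 := by
    rw [← pow_mul, show d * 2 = 2 * d by ring]; exact hG2d
  have hB0 : (g : F) ^ (4 * i + 2) ≠ 0 := pow_ne_zero _ hG0
  have hsum : a0 + a1 + a2 = (g : F) ^ (4 * i + 2) := by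
    rw [ha0, ha1, ha2, ha1]
    have e1 : (g : F) ^ (2 * (4 * i + 2)) = ((g : F) ^ (4 * i + 2)) ^ 2 := by
      rw [← pow_mul]; ring_nf
    have e2 : (g : F) ^ (4 * i + d + 2) = (g : F) ^ (4 * i + 2) * (g : F) ^ d := by
      rw [← pow_add]; congr 1; omega
    rw [e1, e2]
    exact key_sum ((g : F) ^ d) ((g : F) ^ (4 * i + 2)) hA hB0 h2
  intro k
  have hu1 : (g ^ (4 * k)) ^ d = 1 := by
    rw [← zpow_natCast, ← zpow_mul,
      show 4 * k * (d : ℤ) = ((4 * d : ℕ) : ℤ) * k by push_cast; ring,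
      zpow_mul, zpow_natCast, hg4d, one_zpow]
  have hu2 : (g ^ (4 * k + 1)) ^ d = g ^ d := by
    rw [← zpow_natCast, ← zpow_mul,
      show (4 * k + 1) * (d : ℤ) = ((4 * d : ℕ) : ℤ) * k + (d : ℕ) by push_cast; ring,
      zpow_add, zpow_mul, zpow_natCast, hg4d, one_zpow, one_mul, zpow_natCast]
  have hr1 : g ^ (4 * k + 4 * (i : ℤ) + 2) = g ^ (4 * k) * g ^ ((4 * i + 2 : ℕ)) := by
    rw [← zpow_natCast g (4 * i + 2), ← zpow_add]
    congr 1; push_cast; ring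
  have hr2 : g ^ (4 * k + 4 * (i : ℤ) + 3) = g ^ (4 * k + 1) * g ^ ((4 * i + 2 : ℕ)) := by
    rw [← zpow_natCast g (4 * i + 2), ← zpow_add]
    congr 1; push_cast; ring
  constructor
  · rw [hf, hr1]
    push_cast
    have hxd : ((g : F) ^ (4 * k)) ^ d = 1 := by
      have := congrArg (Units.val) hu1
      push_cast at this
      exact this
    have hx3 : ((g : F) ^ (4 * k)) ^ (3 * d + 1) = (g : F) ^ (4 * k) := by
      rw [show 3 * d + 1 = d * 3 + 1 by ring, pow_succ, pow_mul, hxd, one_pow, one_mul]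
    have hx1 : ((g : F) ^ (4 * k)) ^ (d + 1) = (g : F) ^ (4 * k) := by
      rw [pow_succ, hxd, one_mul]
    rw [hx3, hx1]
    linear_combination ((g : F) ^ (4 * k)) * hsum
  · rw [hf, hr2]
    push_cast
    have hyd : ((g : F) ^ (4 * k + 1)) ^ d = (g : F) ^ d := by
      have := congrArg (Units.val) hu2
      push_cast at this
      exact this
    have hy3 : ((g : F) ^ (4 * k + 1)) ^ (3 * d + 1) =
        ((g : F) ^ d) ^ 3 * (g : F) ^ (4 * k + 1) := by
      rw [show 3 * d + 1 = d * 3 + 1 by ring, pow_succ, pow_mul, hyd]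
    have hy1 : ((g : F) ^ (4 * k + 1)) ^ (d + 1) = (g : F) ^ d * (g : F) ^ (4 * k + 1) := by
      rw [pow_succ, hyd, mul_comm]
    rw [hy3, hy1]
    linear_combination ((g : F) ^ (4 * k + 1)) * hsum +
      ((g : F) ^ (4 * k + 1)) * (((g : F) ^ d) ^ 3 - 1) * ha2 +
      ((g : F) ^ (4 * k + 1)) * a1 * (((g : F) ^ d) ^ 2 - 1) * hA
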